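/- arXiv:0708.2182 — 4 statements merged into one kernel-verified Lean document; each statement's English description precedes it below -/
import Mathlib

section
/- Let A = [[a, b],[c, d]] ∈ Sp(1,1) (quaternionic 2×2 matrices with A*J₁A = J₁, J₁ = diag(1,−1)) satisfy A(1,1)ᵗ = λ(1,1)ᵗ for some λ ∈ Sp(1) (unit quaternion). Then c = a − λ, b = λ − a, and d = 2λ − a after normalizing a to be a positive real number, in which case Re λ = 1/a. -/
noncomputable section
open Matrix

/-- if `A = [[a,b],[c,d]] ∈ Sp(1,1)` (with `a` normalized to be a positive
real) satisfies `A(1,1)ᵗ = λ(1,1)ᵗ` for a unit quaternion `λ`, then `c = a − λ`,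
`b = λ − a`, `d = 2λ − a` and `Re λ = 1/a`. -/
theorem sp11_parabolic_form (a : ℝ) (ha : 0 < a) (b c d lam : Quaternion ℝ)
    (hlam : star lam * lam = 1)
    (hA : (Matrix.of ![![(a : Quaternion ℝ), b], ![c, d]])ᴴ *
            Matrix.diagonal ![1, -1] *
            Matrix.of ![![(a : Quaternion ℝ), b], ![c, d]]
          = Matrix.diagonal ![1, -1])
    (heig : (Matrix.of ![![(a : Quaternion ℝ), b], ![c, d]]).mulVec ![1, 1] = ![lam, lam]) :
    c = (a : Quaternion ℝ) - lam ∧ b = lam - (a : Quaternion ℝ) ∧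
      d = 2 * lam - (a : Quaternion ℝ) ∧ lam.re = 1 / a := by
  have e1 := congr_fun (congr_fun hA 0) 0
  have e2 := congr_fun (congr_fun hA 0) 1
  have f1 := congr_fun heig 0
  have f2 := congr_fun heig 1
  simp only [Matrix.mul_apply, Matrix.mulVec, dotProduct, Fin.sum_univ_two] at e1 e2 f1 f2
  simp [Matrix.diagonal] at e1 e2 f1 f2
  have hb : b = lam - (a : Quaternion ℝ) := by
    rw [← f1]; noncomm_ring
  have hd0 : d = lam - c := by
    rw [← f2]; noncomm_ring
  have hcc : star c * c = (a : Quaternion ℝ) * ↑a - 1 := by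
    rw [← e1]; noncomm_ring
  have h : (a : Quaternion ℝ) * (lam - ↑a) + -(star c * (lam - c)) = 0 := by
    rw [← hb, ← hd0]; exact e2
  have key : ((a : Quaternion ℝ) - star c) * lam = 1 := by
    calc ((a : Quaternion ℝ) - star c) * lam
        = ((a : Quaternion ℝ) * (lam - ↑a) + -(star c * (lam - c))) + (↑a * ↑a - star c * c) := by
          noncomm_ring
      _ = 0 + ((a : Quaternion ℝ) * ↑a - ((a : Quaternion ℝ) * ↑a - 1)) := by rw [h, hcc]
      _ = 1 := by noncomm_ring
  have hl2 : lam * star lam = 1 := by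
    rw [Quaternion.self_mul_star, ← Quaternion.star_mul_self, hlam]
  have h3 : (a : Quaternion ℝ) - star c = star lam := by
    calc (a : Quaternion ℝ) - star c = ((a : Quaternion ℝ) - star c) * (lam * star lam) := by
          rw [hl2, mul_one]
      _ = (((a : Quaternion ℝ) - star c) * lam) * star lam := by noncomm_ring
      _ = star lam := by rw [key, one_mul]
  have hc : c = (a : Quaternion ℝ) - lam := by
    have h4 : lam + c = (a : Quaternion ℝ) := by
      have := congrArg star h3
      simpa [sub_eq_iff_eq_add, eq_sub_iff_add_eq] using this.symm
    rw [← h4]; noncomm_ring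
  have hq : ((a : Quaternion ℝ) - star lam) * ((a : Quaternion ℝ) - lam)
      = (a : Quaternion ℝ) * ↑a - 1 := by
    rw [← hcc, hc]
    simp [star_sub, Quaternion.star_coe]
  have h5 : (a : Quaternion ℝ) * lam + star lam * ↑a = 2 := by
    calc (a : Quaternion ℝ) * lam + star lam * ↑a
        = ((a : Quaternion ℝ) * ↑a + star lam * lam)
            - ((a : Quaternion ℝ) - star lam) * ((a : Quaternion ℝ) - lam) := by noncomm_ring
      _ = ((a : Quaternion ℝ) * ↑a + 1) - ((a : Quaternion ℝ) * ↑a - 1) := by rw [hlam, hq]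
      _ = 2 := by noncomm_ring; rw [two_smul]; norm_num [one_add_one_eq_two]
  have h6 : ((a * (2 * lam.re) : ℝ) : Quaternion ℝ) = ((2 : ℝ) : Quaternion ℝ) := by
    calc ((a * (2 * lam.re) : ℝ) : Quaternion ℝ)
        = (a : Quaternion ℝ) * ((2 * lam.re : ℝ) : Quaternion ℝ) := by
          rw [Quaternion.coe_mul]
      _ = (a : Quaternion ℝ) * (lam + star lam) := by rw [Quaternion.self_add_star']
      _ = (a : Quaternion ℝ) * lam + (a : Quaternion ℝ) * star lam := by noncomm_ring
      _ = (a : Quaternion ℝ) * lam + star lam * (a : Quaternion ℝ) := by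
          rw [Quaternion.coe_commutes a (star lam)]
      _ = 2 := h5
      _ = ((2 : ℝ) : Quaternion ℝ) := by
          rw [show ((2:ℝ):Quaternion ℝ) = ((1:ℝ):Quaternion ℝ) + ((1:ℝ):Quaternion ℝ) by
            rw [← Quaternion.coe_add]; norm_num]
          simp [Quaternion.coe_one]
          norm_num
  have h7 : a * (2 * lam.re) = 2 := Quaternion.coe_injective h6
  refine ⟨hc, hb, ?_, ?_⟩
  · rw [hd0, hc]; noncomm_ring
  · field_simp
    linarith
end
end

section
/- Let S be a closed surface and let π₁(S) act trivially on the Lie algebra sp(1) ≅ Im ℍ (imaginary quaternions with commutator bracket). Then the quadratic cup-product map H¹(π₁(S), sp(1)) → H²(π₁(S), sp(1)), u ↦ [u,u] (cup product combined with Lie bracket) is surjective. -/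
noncomputable section

/-- The standard surface relator `∏ᵢ [aᵢ, bᵢ]` in the free group on `2g` generators. -/
def surfaceRel (g : ℕ) : FreeGroup (Fin g ⊕ Fin g) :=
  (List.ofFn (fun i : Fin g =>
    FreeGroup.of (Sum.inl i) * FreeGroup.of (Sum.inr i) *
      (FreeGroup.of (Sum.inl i))⁻¹ * (FreeGroup.of (Sum.inr i))⁻¹)).prod

/-- The fundamental group of the closed orientable surface of genus `g`. -/
abbrev SurfaceGroup (g : ℕ) := PresentedGroup {surfaceRel g}

open scoped Quaternion

namespace CupAux

abbrev Hq := Quaternion ℝ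

lemma bracket_re (a b : Hq) : (a*b - b*a).re = 0 := by
  simp [Quaternion.re_mul]; ring

lemma bracket_surj (w : Hq) (hw : w.re = 0) :
    ∃ p q : Hq, p.re = 0 ∧ q.re = 0 ∧ (p*q - q*p) + (p*q - q*p) = w := by
  by_cases hab : w.imI = 0 ∧ w.imJ = 0
  · obtain ⟨P, hP1, hP2, hP3, hP4⟩ : ∃ P : Hq, P.re = 0 ∧ P.imI = 1 ∧ P.imJ = 0 ∧ P.imK = 0 :=
      ⟨⟨0,1,0,0⟩, rfl, rfl, rfl, rfl⟩
    obtain ⟨Q, hQ1, hQ2, hQ3, hQ4⟩ : ∃ Q : Hq, Q.re = 0 ∧ Q.imI = 0 ∧ Q.imJ = w.imK/4 ∧ Q.imK = 0 :=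
      ⟨⟨0,0,w.imK/4,0⟩, rfl, rfl, rfl, rfl⟩
    refine ⟨P, Q, hP1, hQ1, ?_⟩
    ext <;> simp [Quaternion.re_mul, Quaternion.imI_mul, Quaternion.imJ_mul,
      Quaternion.imK_mul, hw, hab.1, hab.2, hP1, hP2, hP3, hP4, hQ1, hQ2, hQ3, hQ4] <;> ring
  · set a := w.imI; set b := w.imJ; set c := w.imK
    have hs : a^2 + b^2 ≠ 0 := by
      rcases not_and_or.mp hab with h | h <;> positivity
    obtain ⟨P, hP1, hP2, hP3, hP4⟩ : ∃ P : Hq, P.re = 0 ∧ P.imI = -b ∧ P.imJ = a ∧ P.imK = 0 :=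
      ⟨⟨0,-b,a,0⟩, rfl, rfl, rfl, rfl⟩
    obtain ⟨Q, hQ1, hQ2, hQ3, hQ4⟩ : ∃ Q : Hq, Q.re = 0 ∧ Q.imI = -(c*a)/(4*(a^2+b^2)) ∧
        Q.imJ = -(c*b)/(4*(a^2+b^2)) ∧ Q.imK = 1/4 :=
      ⟨⟨0, -(c*a)/(4*(a^2+b^2)), -(c*b)/(4*(a^2+b^2)), 1/4⟩, rfl, rfl, rfl, rfl⟩
    refine ⟨P, Q, hP1, hQ1, ?_⟩
    ext <;> simp [Quaternion.re_mul, Quaternion.imI_mul, Quaternion.imJ_mul,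
      Quaternion.imK_mul, hw, hP1, hP2, hP3, hP4, hQ1, hQ2, hQ3, hQ4] <;> field_simp <;> ring

/-- Heisenberg-type group: ℍ × ℍ with `(a,v)(b,w) = (a+b, v+w+[a,b])`. -/
@[ext] structure Heis where
  a : Hq
  v : Hq

def Heis.mul' (x y : Heis) : Heis := ⟨x.a + y.a, x.v + y.v + (x.a*y.a - y.a*x.a)⟩

instance : Group Heis where
  mul := Heis.mul'
  one := ⟨0, 0⟩
  inv x := ⟨-x.a, -x.v⟩
  mul_assoc x y z := by
    show Heis.mul' (Heis.mul' x y) z = Heis.mul' x (Heis.mul' y z)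
    refine Heis.ext ?_ ?_ <;> simp only [Heis.mul'] <;> first | noncomm_ring | abel
  one_mul x := by
    show Heis.mul' ⟨0,0⟩ x = x
    refine Heis.ext ?_ ?_ <;> simp only [Heis.mul'] <;> first | noncomm_ring | abel
  mul_one x := by
    show Heis.mul' x ⟨0,0⟩ = x
    refine Heis.ext ?_ ?_ <;> simp only [Heis.mul'] <;> first | noncomm_ring | abel
  inv_mul_cancel x := by
    show Heis.mul' ⟨-x.a, -x.v⟩ x = ⟨0,0⟩
    refine Heis.ext ?_ ?_ <;> simp only [Heis.mul'] <;> first | noncomm_ring | abel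

@[simp] lemma Heis.mul_a (x y : Heis) : (x*y).a = x.a + y.a := rfl
@[simp] lemma Heis.mul_v (x y : Heis) : (x*y).v = x.v + y.v + (x.a*y.a - y.a*x.a) := rfl
@[simp] lemma Heis.one_a : (1 : Heis).a = 0 := rfl
@[simp] lemma Heis.one_v : (1 : Heis).v = 0 := rfl
@[simp] lemma Heis.inv_a (x : Heis) : (x⁻¹).a = -x.a := rfl
@[simp] lemma Heis.inv_v (x : Heis) : (x⁻¹).v = -x.v := rfl

lemma Heis.commutator (p q : Hq) :
    (⟨p,0⟩ * ⟨q,0⟩ * (⟨p,0⟩ : Heis)⁻¹ * (⟨q,0⟩ : Heis)⁻¹ : Heis)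
      = ⟨0, (p*q - q*p) + (p*q - q*p)⟩ := by
  refine Heis.ext ?_ ?_ <;> simp <;> noncomm_ring

lemma Heis.prod_of_a_eq_zero :
    ∀ l : List Heis, (∀ x ∈ l, x.a = 0) → l.prod = ⟨0, (l.map Heis.v).sum⟩ := by
  intro l
  induction l with
  | nil => intro _; rfl
  | cons x t ih =>
    intro h
    have hx : x.a = 0 := h x (by simp)
    have ht := ih (fun y hy => h y (by simp [hy]))
    refine Heis.ext ?_ ?_ <;> simp [ht, hx]

/-- A normalized 2-cocycle on a group with values in ℍ (trivial action). -/
structure NCocycle (Γ : Type*) [Group Γ] where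
  c : Γ → Γ → Hq
  coc : ∀ x y z, c y z - c (x*y) z + c x (y*z) - c x y = 0
  one_left : ∀ y, c 1 y = 0
  one_right : ∀ x, c x 1 = 0

variable {Γ : Type*} [Group Γ]

lemma NCocycle.inv_symm (β : NCocycle Γ) (x : Γ) : β.c x⁻¹ x = β.c x x⁻¹ := by
  have h := β.coc x x⁻¹ x
  simp [β.one_left, β.one_right] at h
  linear_combination (norm := abel) h

/-- The central extension of `Γ` by `(ℍ,+)` determined by a normalized 2-cocycle. -/
@[ext] structure Ext (β : NCocycle Γ) where
  g : Γ
  v : Hq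

def Ext.mul' {β : NCocycle Γ} (x y : Ext β) : Ext β :=
  ⟨x.g * y.g, x.v + y.v + β.c x.g y.g⟩

instance (β : NCocycle Γ) : Group (Ext β) where
  mul := Ext.mul'
  one := ⟨1, 0⟩
  inv x := ⟨x.g⁻¹, -x.v - β.c x.g x.g⁻¹⟩
  mul_assoc x y z := by
    show Ext.mul' (Ext.mul' x y) z = Ext.mul' x (Ext.mul' y z)
    refine Ext.ext ?_ ?_
    · exact mul_assoc _ _ _
    · have h := β.coc x.g y.g z.g
      simp only [Ext.mul']
      linear_combination (norm := abel) -h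
  one_mul x := by
    show Ext.mul' ⟨1,0⟩ x = x
    refine Ext.ext ?_ ?_ <;> simp [Ext.mul', β.one_left]
  mul_one x := by
    show Ext.mul' x ⟨1,0⟩ = x
    refine Ext.ext ?_ ?_ <;> simp [Ext.mul', β.one_right]
  inv_mul_cancel x := by
    show Ext.mul' ⟨x.g⁻¹, -x.v - β.c x.g x.g⁻¹⟩ x = ⟨1,0⟩
    refine Ext.ext ?_ ?_
    · exact inv_mul_cancel _
    · have h := β.inv_symm x.g
      simp only [Ext.mul']
      linear_combination (norm := abel) h

@[simp] lemma Ext.mul_g (β : NCocycle Γ) (x y : Ext β) : (x*y).g = x.g * y.g := rfl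
@[simp] lemma Ext.mul_v (β : NCocycle Γ) (x y : Ext β) :
    (x*y).v = x.v + y.v + β.c x.g y.g := rfl
@[simp] lemma Ext.one_g (β : NCocycle Γ) : (1 : Ext β).g = 1 := rfl
@[simp] lemma Ext.one_v (β : NCocycle Γ) : (1 : Ext β).v = 0 := rfl
@[simp] lemma Ext.inv_v (β : NCocycle Γ) (x : Ext β) :
    (x⁻¹).v = -x.v - β.c x.g x.g⁻¹ := rfl

section FreeExt

variable {α : Type*} (β : NCocycle (FreeGroup α))

/-- The canonical section `FreeGroup α →* Ext β`. -/
def sec : FreeGroup α →* Ext β :=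
  FreeGroup.lift (fun x => (⟨FreeGroup.of x, 0⟩ : Ext β))

lemma sec_g (w : FreeGroup α) : (sec β w).g = w := by
  have : (MonoidHom.comp ⟨⟨fun x : Ext β => x.g, rfl⟩, fun _ _ => rfl⟩ (sec β))
      = MonoidHom.id (FreeGroup α) := by
    apply FreeGroup.ext_hom
    intro x
    simp [sec]; rfl
  exact DFunLike.congr_fun this w

/-- The trivializing cochain for `β` on the free group. -/
def psi (w : FreeGroup α) : Hq := (sec β w).v

lemma psi_mul (x y : FreeGroup α) : psi β (x*y) = psi β x + psi β y + β.c x y := by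
  unfold psi
  rw [map_mul, Ext.mul_v, sec_g, sec_g]

@[simp] lemma psi_one : psi β 1 = 0 := by
  unfold psi; rw [map_one]; rfl

lemma psi_re (him : ∀ x y, (β.c x y).re = 0) (w : FreeGroup α) : (psi β w).re = 0 := by
  induction w using FreeGroup.induction_on with
  | C1 => simp
  | of x =>
    unfold psi
    simp [sec]
  | inv_of x hx =>
    have h := psi_mul β (FreeGroup.of x) (FreeGroup.of x)⁻¹
    simp at h
    have : psi β (FreeGroup.of x)⁻¹
        = -psi β (FreeGroup.of x) - β.c (FreeGroup.of x) (FreeGroup.of x)⁻¹ := by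
      linear_combination (norm := abel) -h
    rw [this]
    simp [Quaternion.re_sub, Quaternion.re_neg, hx, him]
  | mul x y hx hy =>
    rw [psi_mul]
    simp [Quaternion.re_add, hx, hy, him]

end FreeExt

end CupAux

open CupAux

/-- for `π₁(S)` (`S` a closed surface) acting trivially on
`sp(1) ≅ Im ℍ`, the quadratic cup-bracket map `H¹(π₁(S), sp(1)) → H²(π₁(S), sp(1))`,
`u ↦ [u,u]`, is surjective: every (imaginary-quaternion-valued) 2-cocycle `c` is
cohomologous to `[u,u] : (x,y) ↦ [u(x), u(y)]` for some 1-cocycle `u` (for trivial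
coefficients, 1-cocycles are homomorphisms to `(Im ℍ, +)`). -/
theorem cup_bracket_surjective_sp1 (g : ℕ) (hg : 1 ≤ g)
    (c : SurfaceGroup g → SurfaceGroup g → Quaternion ℝ)
    (hc_im : ∀ x y, (c x y).re = 0)
    (hc_cocycle : ∀ x y z, c y z - c (x * y) z + c x (y * z) - c x y = 0) :
    ∃ u : SurfaceGroup g → Quaternion ℝ,
      (∀ x, (u x).re = 0) ∧ (∀ x y, u (x * y) = u x + u y) ∧
      ∃ φ : SurfaceGroup g → Quaternion ℝ, (∀ x, (φ x).re = 0) ∧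
        ∀ x y, u x * u y - u y * u x = c x y + (φ y - φ (x * y) + φ x) := by
  classical
  set rels : Set (FreeGroup (Fin g ⊕ Fin g)) := {surfaceRel g} with hrels
  set k : Hq := c 1 1 with hk
  -- normalization
  have hc1 : ∀ y, c 1 y = k := by
    intro y
    have h := hc_cocycle 1 1 y
    simp only [one_mul] at h
    linear_combination (norm := abel) h
  have hc2 : ∀ x, c x 1 = k := by
    intro x
    have h := hc_cocycle x 1 1
    simp only [one_mul, mul_one] at h
    linear_combination (norm := abel) -h
  set mk : FreeGroup (Fin g ⊕ Fin g) →* SurfaceGroup g := PresentedGroup.mk rels with hmk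
  -- pulled-back normalized cocycle
  set B : NCocycle (FreeGroup (Fin g ⊕ Fin g)) :=
    { c := fun x y => c (mk x) (mk y) - k
      coc := by
        intro x y z
        have h := hc_cocycle (mk x) (mk y) (mk z)
        simp only [map_mul]
        linear_combination (norm := abel) h
      one_left := by intro y; simp [hc1]
      one_right := by intro x; simp [hc2] } with hB
  have hBre : ∀ x y, (B.c x y).re = 0 := by
    intro x y
    simp [hB, Quaternion.re_sub, hc_im, hk]
  set v : Hq := psi B (surfaceRel g) with hv
  have hv_re : v.re = 0 := psi_re B hBre _
  obtain ⟨p, q, hp, hq, hpq⟩ := bracket_surj v hv_re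
  set i0 : Fin g := ⟨0, hg⟩ with hi0
  set f : (Fin g ⊕ Fin g) → Hq := fun x =>
    if x = Sum.inl i0 then p else if x = Sum.inr i0 then q else 0 with hf
  have hf_re : ∀ x, (f x).re = 0 := by
    intro x
    simp only [hf]
    split_ifs <;> simp [hp, hq]
  -- the homomorphism u
  have hrel1 : ∀ r ∈ rels, FreeGroup.lift (fun x => Multiplicative.ofAdd (f x)) r = 1 := by
    intro r hr
    rw [hrels] at hr
    rcases hr with rfl
    unfold surfaceRel
    rw [map_list_prod]
    apply List.prod_eq_one
    intro x hx
    rw [List.map_ofFn] at hx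
    obtain ⟨i, rfl⟩ := Set.mem_range.mp ((List.mem_ofFn' _ _).mp hx)
    simp only [Function.comp_apply, map_mul, map_inv]
    rw [mul_comm (FreeGroup.lift _ (FreeGroup.of (Sum.inl i))) (FreeGroup.lift _ (FreeGroup.of (Sum.inr i)))]
    group
  set u₀ : SurfaceGroup g →* Multiplicative Hq := PresentedGroup.toGroup hrel1 with hu₀
  set u : SurfaceGroup g → Hq := fun x => Multiplicative.toAdd (u₀ x) with hu
  -- the Heisenberg section
  set χ : FreeGroup (Fin g ⊕ Fin g) →* Heis :=
    FreeGroup.lift (fun x => (⟨f x, 0⟩ : Heis)) with hχ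
  have hlink : ∀ w, u (mk w) = (χ w).a := by
    have h1 : u₀.comp mk = FreeGroup.lift (fun x => Multiplicative.ofAdd (f x)) := by
      apply FreeGroup.ext_hom
      intro x
      rw [MonoidHom.comp_apply, FreeGroup.lift_apply_of, hu₀, hmk]
      exact PresentedGroup.toGroup.of hrel1
    have h2 : (MonoidHom.comp
        ⟨⟨fun x : Heis => Multiplicative.ofAdd x.a, rfl⟩, fun _ _ => rfl⟩ χ)
        = FreeGroup.lift (fun x => Multiplicative.ofAdd (f x)) := by
      apply FreeGroup.ext_hom
      intro x
      simp [hχ]; rfl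
    intro w
    have e1 := DFunLike.congr_fun h1 w
    have e2 := DFunLike.congr_fun h2 w
    simp only [MonoidHom.comp_apply] at e1 e2
    rw [hu]
    dsimp
    rw [e1, ← e2]
    rfl
  have hmk_one : ∀ w ∈ Subgroup.normalClosure rels, mk w = 1 := by
    intro w hw
    exact (QuotientGroup.eq_one_iff w).mpr hw
  have hmk_mem : ∀ w, mk w = 1 → w ∈ Subgroup.normalClosure rels := by
    intro w hw
    exact (QuotientGroup.eq_one_iff w).mp hw
  have hχa_one : ∀ w, mk w = 1 → (χ w).a = 0 := by
    intro w hw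
    have := hlink w
    rw [hw] at this
    rw [← this, hu]
    simp
  -- the combined trivializer
  set Ψ : FreeGroup (Fin g ⊕ Fin g) → Hq := fun w => (χ w).v - psi B w with hΨ
  have hΨmul : ∀ x y, Ψ (x*y) = Ψ x + Ψ y + ((χ x).a * (χ y).a - (χ y).a * (χ x).a)
      - B.c x y := by
    intro x y
    rw [hΨ]
    dsimp only
    rw [map_mul, Heis.mul_v, psi_mul]
    abel
  have hΨone : Ψ 1 = 0 := by
    rw [hΨ]; dsimp only; rw [map_one, psi_one, Heis.one_v]; simp
  -- value of Ψ on the relator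
  have hχrel : (χ (surfaceRel g)).v = (p*q - q*p) + (p*q - q*p) := by
    unfold surfaceRel
    rw [map_list_prod, List.map_ofFn]
    have hcomm : ∀ i : Fin g,
        (χ ∘ fun i : Fin g =>
          FreeGroup.of (Sum.inl i) * FreeGroup.of (Sum.inr i) *
            (FreeGroup.of (Sum.inl i))⁻¹ * (FreeGroup.of (Sum.inr i))⁻¹) i
        = (⟨0, if i = i0 then (p*q - q*p) + (p*q - q*p) else 0⟩ : Heis) := by
      intro i
      simp only [Function.comp_apply, map_mul, map_inv]
      rw [hχ]
      simp only [FreeGroup.lift_apply_of]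
      rw [Heis.commutator (f (Sum.inl i)) (f (Sum.inr i))]
      by_cases h : i = i0 <;> simp [hf, h]
    rw [funext hcomm]
    rw [Heis.prod_of_a_eq_zero _ (by
      intro x hx
      obtain ⟨i, rfl⟩ := Set.mem_range.mp ((List.mem_ofFn' _ _).mp hx)
      rfl)]
    dsimp only
    rw [List.map_ofFn]
    have : (Heis.v ∘ fun i : Fin g => (⟨0, if i = i0 then (p*q-q*p) + (p*q-q*p) else 0⟩ : Heis))
        = fun i : Fin g => if i = i0 then (p*q-q*p) + (p*q-q*p) else 0 := rfl
    rw [this, List.sum_ofFn]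
    simp
  have hΨrel : Ψ (surfaceRel g) = 0 := by
    rw [hΨ]; dsimp only; rw [hχrel, ← hv, hpq]; simp
  -- the subgroup on which Ψ vanishes
  set K : Subgroup (FreeGroup (Fin g ⊕ Fin g)) :=
    { carrier := {w | mk w = 1 ∧ Ψ w = 0}
      one_mem' := ⟨map_one mk, hΨone⟩
      mul_mem' := by
        rintro x y ⟨hx1, hx2⟩ ⟨hy1, hy2⟩
        refine ⟨by simp [map_mul, hx1, hy1], ?_⟩
        rw [hΨmul, hx2, hy2, hχa_one x hx1]
        have : B.c x y = 0 := by simp [hB, hx1, hc1]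
        rw [this]
        simp
      inv_mem' := by
        rintro x ⟨hx1, hx2⟩
        refine ⟨by simp [hx1], ?_⟩
        have h := hΨmul x x⁻¹
        rw [mul_inv_cancel x, hΨone, hx2, hχa_one x hx1] at h
        have hB0 : B.c x x⁻¹ = 0 := by simp [hB, hx1, hc1]
        rw [hB0] at h
        simp at h
        linear_combination (norm := abel) -h } with hK
  have hKnormal : K.Normal := by
    constructor
    intro n hn x
    obtain ⟨hn1, hn2⟩ := hn
    have hxna : (χ (x*n)).a = (χ x).a := by
      rw [map_mul, Heis.mul_a, hχa_one n hn1, add_zero]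
    have hΨxn : Ψ (x*n) = Ψ x := by
      rw [hΨmul, hn2, hχa_one n hn1]
      have : B.c x n = 0 := by simp [hB, hn1, hc2]
      rw [this]
      simp
    have hxx : Ψ (x * x⁻¹) = 0 := by rw [mul_inv_cancel]; exact hΨone
    have hexp : Ψ x + Ψ x⁻¹ + ((χ x).a * (χ x⁻¹).a - (χ x⁻¹).a * (χ x).a)
        - B.c x x⁻¹ = 0 := by rw [← hΨmul]; exact hxx
    constructor
    · simp [map_mul, hn1]
    · have h2 : Ψ (x*n*x⁻¹) = Ψ (x*n) + Ψ x⁻¹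
          + ((χ (x*n)).a * (χ x⁻¹).a - (χ x⁻¹).a * (χ (x*n)).a) - B.c (x*n) x⁻¹ :=
        hΨmul (x*n) x⁻¹
      have hBc : B.c (x*n) x⁻¹ = B.c x x⁻¹ := by
        simp only [hB]
        rw [map_mul, hn1, mul_one]
      rw [hΨxn, hxna, hBc] at h2
      rw [h2]
      linear_combination (norm := abel) hexp
  have hNK : ∀ w ∈ Subgroup.normalClosure rels, Ψ w = 0 := by
    intro w hw
    have hle : Subgroup.normalClosure rels ≤ K := by
      haveI := hKnormal
      apply Subgroup.normalClosure_le_normal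
      intro r hr
      rw [hrels] at hr
      rcases hr with rfl
      exact ⟨hmk_one _ (Subgroup.subset_normalClosure (by rw [hrels]; rfl)), hΨrel⟩
    exact (hle hw).2
  -- Ψ descends to the quotient
  have hΨcong : ∀ a b, mk a = mk b → Ψ a = Ψ b := by
    intro a b hab
    have hn : mk (a⁻¹ * b) = 1 := by
      rw [map_mul, map_inv, hab]
      simp
    have hmem := hmk_mem _ hn
    have h0 : Ψ (a⁻¹ * b) = 0 := hNK _ hmem
    have : Ψ (a * (a⁻¹ * b)) = Ψ a := by
      rw [hΨmul, h0, hχa_one _ hn]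
      have : B.c a (a⁻¹*b) = 0 := by simp [hB, hn, hc2]
      rw [this]
      simp
    rw [← this]
    congr 1
    group
  set φ₀ : SurfaceGroup g → Hq :=
    fun x => Ψ (Function.surjInv (PresentedGroup.mk_surjective rels) x) with hφ₀
  have hφ₀mk : ∀ w, φ₀ (mk w) = Ψ w := by
    intro w
    apply hΨcong
    exact Function.surjInv_eq (PresentedGroup.mk_surjective rels) (mk w)
  -- imaginarity of Ψ
  have hχv_re : ∀ w, ((χ w).v).re = 0 := by
    intro w
    induction w using FreeGroup.induction_on with
    | C1 => simp
    | of x =>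
      rw [hχ]
      simp
    | inv_of x hx =>
      rw [map_inv, Heis.inv_v]
      simpa using hx
    | mul x y hx hy =>
      rw [map_mul, Heis.mul_v]
      simp only [Quaternion.re_add, hx, hy, bracket_re]
      norm_num
  have hΨre : ∀ w, (Ψ w).re = 0 := by
    intro w
    rw [hΨ]
    simp [Quaternion.re_sub, hχv_re, psi_re B hBre]
  -- u properties
  have hu_re : ∀ x, (u x).re = 0 := by
    intro x
    obtain ⟨w, rfl⟩ := PresentedGroup.mk_surjective rels x
    rw [hlink w]
    have : ∀ w', ((χ w').a).re = 0 := by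
      intro w'
      induction w' using FreeGroup.induction_on with
      | C1 => simp
      | of x =>
        rw [hχ]
        simp [hf_re]
      | inv_of x hx => rw [map_inv, Heis.inv_a]; simpa using hx
      | mul x y hx hy => rw [map_mul, Heis.mul_a]; simp [Quaternion.re_add, hx, hy]
    exact this w
  have hu_add : ∀ x y, u (x*y) = u x + u y := by
    intro x y
    rw [hu]
    dsimp only
    rw [map_mul]
    rfl
  refine ⟨u, hu_re, hu_add, fun x => -φ₀ x - k, ?_, ?_⟩
  · intro x
    obtain ⟨w, rfl⟩ := PresentedGroup.mk_surjective rels x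
    dsimp only
    rw [show PresentedGroup.mk rels w = mk w from rfl, hφ₀mk]
    simp [Quaternion.re_sub, Quaternion.re_neg, hΨre, hk, hc_im]
  · intro x y
    obtain ⟨a, rfl⟩ := PresentedGroup.mk_surjective rels x
    obtain ⟨b, rfl⟩ := PresentedGroup.mk_surjective rels y
    have hxy : mk a * mk b = mk (a*b) := (map_mul mk a b).symm
    beta_reduce
    rw [show PresentedGroup.mk rels a = mk a from rfl,
      show PresentedGroup.mk rels b = mk b from rfl]
    rw [hxy, hφ₀mk, hφ₀mk, hφ₀mk]
    have h := hΨmul a b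
    have hBc : B.c a b = c (mk a) (mk b) - k := rfl
    rw [hBc] at h
    rw [hlink a, hlink b]
    linear_combination (norm := abel) -h
end
end

section
/- Let W ⊂ sp(1,1) be the real subspace of matrices j·[[z, w],[−w, t]] with z, w, t ∈ ℂ. For X = j[[z,w],[−w,t]] and X' = j[[z',w'],[−w',t']] in W, the u(1)-component of the bracket satisfies π_{u(1)}([X, X']) = 2·Im(conj(z)z' + conj(t)t' − 2·conj(w)w'), and this expression defines a (real) symplectic (nondegenerate skew-symmetric bilinear) form on W. -/
noncomputable section
open Matrix

def toQ (c : ℂ) : Quaternion ℝ := ⟨c.re, c.im, 0, 0⟩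
def jQ : Quaternion ℝ := ⟨0, 0, 1, 0⟩
def iQ : Quaternion ℝ := ⟨0, 1, 0, 0⟩

/-- An element `j·[[z,w],[−w,t]]` of the subspace `W ⊂ sp(1,1)`. -/
def Wmat (z w t : ℂ) : Matrix (Fin 2) (Fin 2) (Quaternion ℝ) :=
  Matrix.of ![![jQ * toQ z, jQ * toQ w], ![jQ * (-(toQ w)), jQ * toQ t]]

/-- The projection `π_{u(1)} : sp(1,1) → ℝ`, `[[a,b],[conj b,d]] ↦ Re(i(a+d))`. -/
def piu1 (A : Matrix (Fin 2) (Fin 2) (Quaternion ℝ)) : ℝ := (iQ * (A 0 0 + A 1 1)).re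

/-- for `X, X' ∈ W`, `π_{u(1)}([X,X']) = 2·Im(z̄z' + t̄t' − 2w̄w')`, and this
expression is a nondegenerate skew-symmetric (real) bilinear — i.e. symplectic — form on `W`. -/
theorem piu1_bracket_symplectic :
    (∀ z w t z' w' t' : ℂ,
      piu1 (Wmat z w t * Wmat z' w' t' - Wmat z' w' t' * Wmat z w t)
        = 2 * ((starRingEnd ℂ z * z' + starRingEnd ℂ t * t'
            - 2 * (starRingEnd ℂ w * w')).im)) ∧
    (∀ z w t z' w' t' : ℂ,
      2 * ((starRingEnd ℂ z * z' + starRingEnd ℂ t * t' - 2 * (starRingEnd ℂ w * w')).im)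
        = -(2 * ((starRingEnd ℂ z' * z + starRingEnd ℂ t' * t
            - 2 * (starRingEnd ℂ w' * w)).im))) ∧
    (∀ z w t : ℂ,
      (∀ z' w' t' : ℂ,
        2 * ((starRingEnd ℂ z * z' + starRingEnd ℂ t * t'
            - 2 * (starRingEnd ℂ w * w')).im) = 0) →
      z = 0 ∧ w = 0 ∧ t = 0) := by

  refine ⟨?_, ?_, ?_⟩
  · intro z w t z' w' t'
    simp [piu1, Wmat, Matrix.mul_apply, Fin.sum_univ_two,
      Quaternion.re_mul, Quaternion.imI_mul, Quaternion.imJ_mul, Quaternion.imK_mul,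
      Quaternion.re_add, Quaternion.re_sub, Quaternion.re_neg, Quaternion.imI_neg,
      Quaternion.imJ_neg, Quaternion.imK_neg, Quaternion.imI_add, Quaternion.imI_sub,
      Quaternion.imJ_add, Quaternion.imJ_sub, Quaternion.imK_add, Quaternion.imK_sub,
      Complex.mul_im, Complex.add_im, Complex.sub_im]
    simp [toQ, jQ, iQ]
    ring
  · intro z w t z' w' t'
    simp [Complex.sub_im, Complex.add_im, Complex.mul_im]
    ring
  · intro z w t h
    refine ⟨?_, ?_, ?_⟩
    · have := h (Complex.I * z) 0 0
      simp [Complex.ext_iff, Complex.mul_im, Complex.mul_re] at this ⊢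
      constructor <;> nlinarith [this]
    · have := h 0 (Complex.I * w) 0
      simp [Complex.ext_iff, Complex.mul_im, Complex.mul_re] at this ⊢
      constructor <;> nlinarith [this]
    · have := h 0 0 (Complex.I * t)
      simp [Complex.ext_iff, Complex.mul_im, Complex.mul_re] at this ⊢
      constructor <;> nlinarith [this]
end
end

section
/- For the Heisenberg-type boundary of quaternionic hyperbolic plane: a parabolic element of PSp(2,1) fixing the boundary point (0,1) and stabilizing the quaternionic line {(0,ℍ)} is block diagonal of the form diag(μ, [[a, λ−a],[a−λ, 2λ−a]]) with μ ∈ Sp(1), a ≥ 1 real, λ ∈ Sp(1), Re λ = 1/a; in particular, the (1,2) and (1,3) entries vanish, while a parabolic element fixing (0,1) but not stabilizing {(0,ℍ)} has (1,2)-entry x ≠ 0 and (1,3)-entry −x. -/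
noncomputable section
open Matrix

def J3 : Matrix (Fin 3) (Fin 3) (Quaternion ℝ) := Matrix.diagonal ![1, 1, -1]

/-- `A` stabilizes the quaternionic line `{(0,ℍ)}` of the ball model. -/
def StabilizesQLine (A : Matrix (Fin 3) (Fin 3) (Quaternion ℝ)) : Prop :=
  ∀ q : Quaternion ℝ, ‖q‖ < 1 → ∃ q' μ : Quaternion ℝ, ‖q'‖ < 1 ∧ μ ≠ 0 ∧
    A.mulVec ![0, q, 1] = fun i => (![0, q', 1] : Fin 3 → Quaternion ℝ) i * μ

set_option maxHeartbeats 1000000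

local notation "QH" => Quaternion ℝ

theorem coe2' : ((2:ℝ):QH) = (2:QH) := by
  have := Quaternion.coe_add (1:ℝ) 1
  norm_num at this
  exact this

theorem coe4' : ((4:ℝ):QH) = (4:QH) := by
  have := Quaternion.coe_add (2:ℝ) 2
  rw [coe2'] at this
  norm_num at this
  exact this

theorem star2' : star (2:QH) = 2 := by rw [← coe2', Quaternion.star_coe]

theorem re2' : (2:QH).re = 2 := by rw [← coe2', Quaternion.re_coe]

/-- Core quaternion computation for the normal form. -/
theorem aux_nf (lam0 b : QH) (hlam0 : star lam0 * lam0 = 1) (hl0 : lam0 * star lam0 = 1)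
    (hre : star b * lam0 + star lam0 * b = 2) :
    ∃ (s lam : QH) (a : ℝ), s ≠ 0 ∧ star lam * lam = 1 ∧ 1 ≤ a ∧ lam.re = 1 / a ∧
      star s * s = 1 ∧ b * s = (a : QH) ∧ lam0 * s = lam := by
  obtain ⟨t, ht_def⟩ : ∃ t : QH, t = 2 * (b * star lam0) - 2 := ⟨_, rfl⟩
  have hxre : (star b * lam0).re = 1 := by
    have h := congrArg QuaternionAlgebra.re hre
    rw [Quaternion.re_add,
      show star lam0 * b = star (star b * lam0) by rw [StarMul.star_mul, star_star],
      Quaternion.re_star, re2'] at h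
    linarith
  have hyre : (b * star lam0).re = 1 := by
    rw [show (b * star lam0).re = (star lam0 * b).re by simp [Quaternion.re_mul]; ring]
    rw [show star lam0 * b = star (star b * lam0) by rw [StarMul.star_mul, star_star],
      Quaternion.re_star]
    exact hxre
  have htre : t.re = 0 := by
    rw [ht_def, Quaternion.re_sub, show ((2:QH) * (b * star lam0)) = (2:ℝ) • (b * star lam0)
      by rw [← Quaternion.coe_mul_eq_smul, coe2'], Quaternion.re_smul, re2']
    simp [hyre]
  have hts : star t = -t := Quaternion.star_eq_neg.mpr htre
  obtain ⟨N, hN_def⟩ : ∃ N : ℝ, N = Quaternion.normSq t := ⟨_, rfl⟩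
  have hNnn : 0 ≤ N := hN_def ▸ Quaternion.normSq_nonneg
  have htt : t * t = -((N : ℝ) : QH) := by
    have h : t * t = -(star t * t) := by rw [hts, neg_mul, neg_neg]
    rw [h, Quaternion.star_mul_self, hN_def]
  obtain ⟨a, ha_def⟩ : ∃ a : ℝ, a = Real.sqrt (1 + N / 4) := ⟨_, rfl⟩
  have ha_sq : a ^ 2 = 1 + N / 4 := by rw [ha_def]; exact Real.sq_sqrt (by linarith)
  have ha1 : (1:ℝ) ≤ a := by nlinarith [ha_def ▸ Real.sqrt_nonneg (1 + N/4)]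
  have ha0 : (0:ℝ) < a := lt_of_lt_of_le one_pos ha1
  obtain ⟨r, hr_def⟩ : ∃ r : ℝ, r = (2 * a)⁻¹ := ⟨_, rfl⟩
  obtain ⟨lam, hlam_def⟩ : ∃ lam : QH, lam = r • ((2:QH) - t) := ⟨_, rfl⟩
  have key1 : (t + 2) * (2 - t) = ((4 + N : ℝ) : QH) := by
    have expand : (t + 2) * (2 - t) = 4 - t * t := by
      have h4 : (2:QH) * 2 = 4 := by norm_num
      noncomm_ring
      rw [← h4]
      noncomm_ring
    rw [expand, htt, Quaternion.coe_add, coe4', sub_neg_eq_add]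
  have key2 : (2 + t) * (2 - t) = ((4 + N : ℝ) : QH) := by rw [← key1]; noncomm_ring
  have hstar_lam : star lam = r • ((2:QH) + t) := by
    rw [hlam_def, ← Quaternion.coe_mul_eq_smul, StarMul.star_mul, Quaternion.star_coe,
      Quaternion.mul_coe_eq_smul, star_sub, hts, star2', sub_neg_eq_add]
  have hlam_unit : star lam * lam = 1 := by
    rw [hstar_lam, hlam_def, smul_mul_assoc, mul_smul_comm, smul_smul, key2,
      Quaternion.smul_coe]
    rw [show r * r * (4 + N) = 1 by rw [hr_def]; field_simp; nlinarith [ha_sq]]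
    exact Quaternion.coe_one
  have hlam_ne : lam ≠ 0 := by
    intro h
    rw [h, mul_zero] at hlam_unit
    exact one_ne_zero hlam_unit.symm
  have hlam_re : lam.re = 1 / a := by
    rw [hlam_def, Quaternion.re_smul, Quaternion.re_sub, htre, re2', hr_def]
    simp
  obtain ⟨s, hs_def⟩ : ∃ s : QH, s = star lam0 * lam := ⟨_, rfl⟩
  have hs_ne : s ≠ 0 := by
    rw [hs_def]
    apply mul_ne_zero _ hlam_ne
    intro h
    rw [h, zero_mul] at hlam0
    exact one_ne_zero hlam0.symm
  have hss : star s * s = 1 := by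
    rw [hs_def, StarMul.star_mul, star_star]
    calc star lam * lam0 * (star lam0 * lam) = star lam * (lam0 * star lam0) * lam := by
          noncomm_ring
      _ = 1 := by rw [hl0, mul_one, hlam_unit]
  have hls : lam0 * s = lam := by
    rw [hs_def, ← mul_assoc, hl0, one_mul]
  have hbt : b * star lam0 = (2⁻¹ : ℝ) • (t + 2) := by
    have h2 : ((2:ℝ) • (b * star lam0) : QH) = t + 2 := by
      rw [← Quaternion.coe_mul_eq_smul, coe2', ht_def]
      noncomm_ring
    calc b * star lam0 = (2⁻¹ : ℝ) • ((2:ℝ) • (b * star lam0)) := by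
          rw [smul_smul]; norm_num
      _ = (2⁻¹ : ℝ) • (t + 2) := by rw [h2]
  have hbs : b * s = (a : QH) := by
    rw [hs_def, ← mul_assoc, hbt, smul_mul_assoc, hlam_def, mul_smul_comm, smul_smul,
      key1, Quaternion.smul_coe]
    rw [show 2⁻¹ * r * (4 + N) = a by rw [hr_def]; field_simp; nlinarith [ha_sq]]
  exact ⟨s, lam, a, hs_ne, hlam_unit, ha1, hlam_re, hss, hbs, hls⟩

/-- let `A ∈ Sp(2,1)` fix the boundary point `(0,1)` (i.e.
`A(0,1,1)ᵗ = (0,1,1)ᵗλ₀`, `λ₀ ∈ Sp(1)`).  If `A` stabilizes the quaternionic line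
`{(0,ℍ)}`, then `A` is block diagonal and, as an element of `PSp(2,1)` (up to conjugation
in `Sp(2,1)` and a nonzero scalar), equals `diag(μ, [[a, λ−a],[a−λ, 2λ−a]])` with
`μ ∈ Sp(1)`, `a ≥ 1` real, `λ ∈ Sp(1)`, `Re λ = 1/a`.  If `A` does not stabilize the
line, then its `(1,2)`-entry `x` is nonzero and its `(1,3)`-entry is `−x`. -/
theorem parabolic_normal_form (A : Matrix (Fin 3) (Fin 3) (Quaternion ℝ))
    (hA : Aᴴ * J3 * A = J3) (lam0 : Quaternion ℝ) (hlam0 : star lam0 * lam0 = 1)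
    (heig : A.mulVec ![0, 1, 1] = ![0, lam0, lam0]) :
    (StabilizesQLine A →
      A 0 1 = 0 ∧ A 0 2 = 0 ∧ A 1 0 = 0 ∧ A 2 0 = 0 ∧
      ∃ g : Matrix (Fin 3) (Fin 3) (Quaternion ℝ), gᴴ * J3 * g = J3 ∧
        ∃ (s μ lam : Quaternion ℝ) (a : ℝ), s ≠ 0 ∧ star μ * μ = 1 ∧
          star lam * lam = 1 ∧ 1 ≤ a ∧ lam.re = 1 / a ∧
          g * A * (J3 * gᴴ * J3) * (s • (1 : Matrix (Fin 3) (Fin 3) (Quaternion ℝ)))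
            = Matrix.of ![![μ, 0, 0],
                ![0, (a : Quaternion ℝ), lam - (a : Quaternion ℝ)],
                ![0, (a : Quaternion ℝ) - lam, 2 * lam - (a : Quaternion ℝ)]]) ∧
    (¬ StabilizesQLine A → A 0 1 ≠ 0 ∧ A 0 2 = -(A 0 1)) := by
  have hent : ∀ i j, star (A 0 i) * A 0 j + star (A 1 i) * A 1 j - star (A 2 i) * A 2 j
      = J3 i j := by
    intro i j
    have h : (Aᴴ * J3 * A) i j = J3 i j := by rw [hA]
    simpa [Matrix.mul_apply, Fin.sum_univ_three, Matrix.conjTranspose_apply, J3,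
      Matrix.diagonal, mul_assoc, sub_eq_add_neg] using h
  have hrow : ∀ i, A i 1 + A i 2 = ![0, lam0, lam0] i := by
    intro i
    have h := congrFun heig i
    simpa [Matrix.mulVec, dotProduct, Fin.sum_univ_three] using h
  have hr0 : A 0 1 + A 0 2 = 0 := by simpa using hrow 0
  have hr1 : A 1 1 + A 1 2 = lam0 := by simpa using hrow 1
  have hr2 : A 2 1 + A 2 2 = lam0 := by simpa using hrow 2
  have hl0 : lam0 * star lam0 = 1 := by
    have h1 : ((Quaternion.normSq lam0 : ℝ) : Quaternion ℝ) = 1 := by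
      rw [← Quaternion.star_mul_self, hlam0]
    have h2 : Quaternion.normSq lam0 = 1 :=
      Quaternion.coe_injective (h1.trans (Quaternion.coe_one).symm)
    rw [Quaternion.self_mul_star, h2, Quaternion.coe_one]
  have facts : ∀ (_ : A 0 1 = 0) (_ : A 0 2 = 0),
      A 1 0 = 0 ∧ A 2 0 = 0 ∧ star (A 0 0) * A 0 0 = 1 ∧
      star (A 1 1) * A 1 1 - star (A 2 1) * A 2 1 = 1 ∧
      star (A 1 1) * A 1 2 - star (A 2 1) * A 2 2 = 0 ∧
      star (A 1 2) * A 1 2 - star (A 2 2) * A 2 2 = -1 ∧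
      A 1 1 - A 2 1 = lam0 := by
    intro h01 h02
    have h11 : star (A 1 1) * A 1 1 - star (A 2 1) * A 2 1 = 1 := by
      have h := hent 1 1
      simpa [J3, h01, Matrix.diagonal_apply] using h
    have h12 : star (A 1 1) * A 1 2 - star (A 2 1) * A 2 2 = 0 := by
      have h := hent 1 2
      simpa [J3, h01, h02, Matrix.diagonal_apply] using h
    have h22 : star (A 1 2) * A 1 2 - star (A 2 2) * A 2 2 = -1 := by
      have h := hent 2 2
      simpa [J3, h02, Matrix.diagonal_apply] using h
    have hbd : A 1 1 - A 2 1 = lam0 := by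
      have step : (star (A 1 1) - star (A 2 1)) * lam0 = 1 := by
        calc (star (A 1 1) - star (A 2 1)) * lam0
            = (star (A 1 1)) * (A 1 1 + A 1 2) - (star (A 2 1)) * (A 2 1 + A 2 2) := by
              rw [hr1, hr2]; noncomm_ring
          _ = (star (A 1 1) * A 1 1 - star (A 2 1) * A 2 1)
              + (star (A 1 1) * A 1 2 - star (A 2 1) * A 2 2) := by noncomm_ring
          _ = 1 := by rw [h11, h12, add_zero]
      have step2 : star (A 1 1) - star (A 2 1) = star lam0 := by
        have h := congrArg (· * star lam0) step
        simpa [mul_assoc, hl0] using h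
      have h := congrArg star step2
      simpa [star_sub] using h
    have e01 : star (A 1 0) * A 1 1 - star (A 2 0) * A 2 1 = 0 := by
      have h := hent 0 1
      simpa [J3, h01, Matrix.diagonal_apply] using h
    have e02 : star (A 1 0) * A 1 2 - star (A 2 0) * A 2 2 = 0 := by
      have h := hent 0 2
      simpa [J3, h02, Matrix.diagonal_apply] using h
    have epp : star (A 1 0) = star (A 2 0) := by
      have step : (star (A 1 0) - star (A 2 0)) * lam0 = 0 := by
        calc (star (A 1 0) - star (A 2 0)) * lam0
            = (star (A 1 0)) * (A 1 1 + A 1 2) - (star (A 2 0)) * (A 2 1 + A 2 2) := by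
              rw [hr1, hr2]; noncomm_ring
          _ = (star (A 1 0) * A 1 1 - star (A 2 0) * A 2 1)
              + (star (A 1 0) * A 1 2 - star (A 2 0) * A 2 2) := by noncomm_ring
          _ = 0 := by rw [e01, e02, add_zero]
      have h := congrArg (· * star lam0) step
      simp only [mul_assoc, hl0, mul_one, zero_mul] at h
      exact sub_eq_zero.mp h
    have hp : A 1 0 = 0 := by
      have step : star (A 1 0) * lam0 = 0 := by
        have h : star (A 1 0) * (A 1 1 - A 2 1) = 0 := by
          calc star (A 1 0) * (A 1 1 - A 2 1)
              = star (A 1 0) * A 1 1 - star (A 2 0) * A 2 1 := by rw [← epp]; noncomm_ring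
            _ = 0 := e01
        rwa [hbd] at h
      have h := congrArg (· * star lam0) step
      simp only [mul_assoc, hl0, mul_one, zero_mul] at h
      simpa using congrArg star h
    have hp2 : A 2 0 = 0 := by
      have h := congrArg star epp
      simp only [star_star] at h
      rw [← h, hp]
    have h00 : star (A 0 0) * A 0 0 = 1 := by
      have h := hent 0 0
      simpa [J3, hp, hp2, Matrix.diagonal_apply] using h
    exact ⟨hp, hp2, h00, h11, h12, h22, hbd⟩
  -- if the (0,2) entry vanishes then A stabilizes the line
  have hstab_of : A 0 2 = 0 → StabilizesQLine A := by
    intro h02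
    have h01 : A 0 1 = 0 := by
      have h := hr0
      rw [h02, add_zero] at h
      exact h
    obtain ⟨hp, hp2, _, h11, h12, h22, _⟩ := facts h01 h02
    intro q hq
    have h12s : star (A 1 2) * A 1 1 - star (A 2 2) * A 2 1 = 0 := by
      have h := congrArg star h12
      simpa [star_sub, StarMul.star_mul, star_star] using h
    have hkey : star (A 1 1 * q + A 1 2) * (A 1 1 * q + A 1 2)
        - star (A 2 1 * q + A 2 2) * (A 2 1 * q + A 2 2) = star q * q - 1 := by
      calc star (A 1 1 * q + A 1 2) * (A 1 1 * q + A 1 2)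
          - star (A 2 1 * q + A 2 2) * (A 2 1 * q + A 2 2)
          = star q * (star (A 1 1) * A 1 1 - star (A 2 1) * A 2 1) * q
            + star q * (star (A 1 1) * A 1 2 - star (A 2 1) * A 2 2)
            + (star (A 1 2) * A 1 1 - star (A 2 2) * A 2 1) * q
            + (star (A 1 2) * A 1 2 - star (A 2 2) * A 2 2) := by
              simp only [star_add, StarMul.star_mul]
              noncomm_ring
        _ = star q * 1 * q + star q * 0 + 0 * q + (-1) := by rw [h11, h12, h12s, h22]
        _ = star q * q - 1 := by noncomm_ring
    rw [Quaternion.star_mul_self, Quaternion.star_mul_self, Quaternion.star_mul_self] at hkey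
    have hreal : Quaternion.normSq (A 1 1 * q + A 1 2)
        - Quaternion.normSq (A 2 1 * q + A 2 2) = Quaternion.normSq q - 1 := by
      apply Quaternion.coe_injective
      push_cast
      exact_mod_cast hkey
    have hq2 : Quaternion.normSq q < 1 := by
      rw [Quaternion.normSq_eq_norm_mul_self]
      nlinarith [norm_nonneg q]
    have hlt : Quaternion.normSq (A 1 1 * q + A 1 2)
        < Quaternion.normSq (A 2 1 * q + A 2 2) := by linarith
    have hvne : A 2 1 * q + A 2 2 ≠ 0 := by
      intro h
      rw [h] at hlt
      simp only [map_zero] at hlt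
      nlinarith [Quaternion.normSq_nonneg (a := A 1 1 * q + A 1 2)]
    refine ⟨(A 1 1 * q + A 1 2) * (A 2 1 * q + A 2 2)⁻¹, A 2 1 * q + A 2 2, ?_, hvne, ?_⟩
    · have hupos : (0:ℝ) ≤ ‖A 1 1 * q + A 1 2‖ := norm_nonneg _
      have hvpos : (0:ℝ) < ‖A 2 1 * q + A 2 2‖ := norm_pos_iff.mpr hvne
      have hnn : ‖A 1 1 * q + A 1 2‖ < ‖A 2 1 * q + A 2 2‖ := by
        have e1 := Quaternion.normSq_eq_norm_mul_self (a := A 1 1 * q + A 1 2)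
        have e2 := Quaternion.normSq_eq_norm_mul_self (a := A 2 1 * q + A 2 2)
        nlinarith
      rw [norm_mul, norm_inv, ← div_eq_mul_inv]
      exact (div_lt_one hvpos).mpr hnn
    · funext i
      fin_cases i
      · simp [Matrix.mulVec, dotProduct, Fin.sum_univ_three, h01, h02]
      · simp only [Matrix.mulVec, dotProduct, Fin.sum_univ_three]
        simp [hp, mul_assoc, inv_mul_cancel₀ hvne]
      · simp [Matrix.mulVec, dotProduct, Fin.sum_univ_three, hp2]
  constructor
  · intro hstab
    obtain ⟨q', μ0, _, _, hvec⟩ := hstab 0 (by norm_num)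
    have h02 : A 0 2 = 0 := by
      have h := congrFun hvec 0
      simpa [Matrix.mulVec, dotProduct, Fin.sum_univ_three] using h
    have h01 : A 0 1 = 0 := by
      have h := hr0
      rw [h02, add_zero] at h
      exact h
    obtain ⟨hp, hp2, h00, h11, h12, h22, hbd⟩ := facts h01 h02
    have hd : A 2 1 = A 1 1 - lam0 := by rw [← hbd]; noncomm_ring
    have hre : star (A 1 1) * lam0 + star lam0 * A 1 1 = 2 := by
      have h := h11
      rw [hd, star_sub] at h
      calc star (A 1 1) * lam0 + star lam0 * A 1 1
          = (star (A 1 1) * A 1 1 - (star (A 1 1) - star lam0) * (A 1 1 - lam0))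
            + star lam0 * lam0 := by noncomm_ring
        _ = 1 + 1 := by rw [h, hlam0]
        _ = 2 := one_add_one_eq_two
    obtain ⟨s, lam, a, hs_ne, hlam_unit, ha1, hlam_re, hss, hbs, hls⟩ :=
      aux_nf lam0 (A 1 1) hlam0 hl0 hre
    have hc : A 1 2 = lam0 - A 1 1 := by rw [← hr1]; noncomm_ring
    have he : A 2 2 = lam0 - A 2 1 := by rw [← hr2]; noncomm_ring
    refine ⟨h01, h02, hp, hp2, 1, by simp, s, A 0 0 * s, lam, a, hs_ne, ?_, hlam_unit,
      ha1, hlam_re, ?_⟩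
    · calc star (A 0 0 * s) * (A 0 0 * s)
          = star s * (star (A 0 0) * A 0 0) * s := by rw [StarMul.star_mul]; noncomm_ring
        _ = star s * s := by rw [h00]; noncomm_ring
        _ = 1 := hss
    · have hJ : J3 * (1 : Matrix (Fin 3) (Fin 3) (Quaternion ℝ))ᴴ * J3 = 1 := by
        rw [conjTranspose_one, mul_one]
        refine Matrix.ext fun i j => ?_
        fin_cases i <;> fin_cases j <;>
          simp [J3, Matrix.mul_apply, Fin.sum_univ_three, Matrix.diagonal_apply,
            Matrix.one_apply]
      rw [one_mul, hJ, mul_one]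
      refine Matrix.ext fun i j => ?_
      have hentry : ∀ i j, (A * (s • (1 : Matrix (Fin 3) (Fin 3) (Quaternion ℝ)))) i j
          = A i j * s := by
        intro i j
        simp [Matrix.mul_apply, Matrix.smul_apply, Matrix.one_apply, Fin.sum_univ_three,
          mul_ite, Finset.sum_ite_eq']
      rw [hentry]
      fin_cases i <;> fin_cases j
      · rfl
      · show A 0 1 * s = 0
        rw [h01, zero_mul]
      · show A 0 2 * s = 0
        rw [h02, zero_mul]
      · show A 1 0 * s = 0
        rw [hp, zero_mul]
      · show A 1 1 * s = (a : Quaternion ℝ)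
        exact hbs
      · show A 1 2 * s = lam - (a : Quaternion ℝ)
        rw [hc, sub_mul, hls, hbs]
      · show A 2 0 * s = 0
        rw [hp2, zero_mul]
      · show A 2 1 * s = (a : Quaternion ℝ) - lam
        rw [hd, sub_mul, hls, hbs]
      · show A 2 2 * s = 2 * lam - (a : Quaternion ℝ)
        rw [he, hd, sub_mul, sub_mul, hls, hbs]
        noncomm_ring
  · intro hnstab
    have h0 : A 0 2 = -(A 0 1) := by
      have h := hr0
      rw [add_eq_zero_iff_neg_eq] at h
      exact h.symm
    refine ⟨?_, h0⟩
    intro h01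
    apply hnstab
    apply hstab_of
    rw [h0, h01, neg_zero]
end
end
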